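/- Let (Ω, 𝒜, ℙ) be a probability space, m ≥ 1, and X = (X_1,…,X_m) an m-tuple of stochastic processes with right-continuous paths having left limits. Let ρ map each delayed and stopped version of X to a real random variable, and let 𝒯 be a set of delays containing a refining sequence (τ^n)_{n∈ℕ} of phased delays increasing to identity; set 𝒳 = {X⋄τ : τ ∈ 𝒯} ∪ {X}. Let δ and δ̃ be decomposition schemes on 𝒳: for each Y ∈ 𝒳, δ(Y) = (δ_1(Y),…,δ_m(Y)) and δ̃(Y) are m-tuples of processes with right-continuous paths having left limits, starting at 0, that are additive (almost surely ρ(Y^t) − ρ(Y^0) = Σ_i δ_i(Y)(t) for every t ≥ 0, and likewise for δ̃) and normalized (if every path of Y_i is constant on (a,b], then almost surely δ_i(Y), resp. δ̃_i(Y), is constant on (a,b]). Assume both δ and δ̃ are stable at X: for every t > 0 and i, δ_i(X⋄τ^n)(t−) → δ_i(X)(t−) and δ̃_i(X⋄τ^n)(t−) → δ̃_i(X)(t−) in probability as n → ∞. Then almost surely δ_i(X)(t) = δ̃_i(X)(t) for all i and all t ≥ 0. -/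

import Mathlib

open Filter Topology Set MeasureTheory

/-- A path is càdlàg on `[0,∞)`: right-continuous at every `t ≥ 0` and with left limits at
every `t > 0`. -/
def CadlagOn (f : ℝ → ℝ) : Prop :=
  (∀ t, 0 ≤ t → ContinuousWithinAt f (Ici t) t) ∧
  (∀ t, 0 < t → ∃ L, Tendsto f (𝓝[<] t) (𝓝 L))

/-- A delay: each component is `[0,∞)`-valued, nondecreasing, right-continuous and bounded
above by the identity on `[0,∞)`. -/
def IsDelay {m : ℕ} (τ : Fin m → ℝ → ℝ) : Prop :=
  ∀ i, (∀ s, 0 ≤ s → 0 ≤ τ i s) ∧ (∀ s u, 0 ≤ s → s ≤ u → τ i s ≤ τ i u) ∧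
    (∀ s, 0 ≤ s → ContinuousWithinAt (τ i) (Ici s) s) ∧ (∀ s, 0 ≤ s → τ i s ≤ s)

/-- A delay is phased if there is an unbounded partition of `[0,∞)` such that on each
partition interval at most one of its components is non-constant. -/
def IsPhasedDelay {m : ℕ} (τ : Fin m → ℝ → ℝ) : Prop :=
  ∃ u : ℕ → ℝ, u 0 = 0 ∧ StrictMono u ∧ Tendsto u atTop atTop ∧
    ∀ l, ∃ i₀ : Fin m, ∀ j ≠ i₀,
      ∀ x ∈ Ioc (u l) (u (l + 1)), ∀ y ∈ Ioc (u l) (u (l + 1)), τ j x = τ j y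

/-- A refining sequence of delays that increases to identity. -/
def IsRefiningToIdentity {m : ℕ} (τ : ℕ → Fin m → ℝ → ℝ) : Prop :=
  ∀ (i : Fin m) (t : ℝ), 0 ≤ t →
    (∀ n, τ n i '' Icc 0 t ⊆ τ (n + 1) i '' Icc 0 t) ∧
    closure (⋃ n, τ n i '' Icc 0 t) = Icc 0 t

/-- The delayed process tuple `X ⋄ τ = (X_1 ∘ τ_1, …, X_m ∘ τ_m)`. -/
def delayed {Ω : Type*} {m : ℕ} (X : Fin m → Ω → ℝ → ℝ) (τ : Fin m → ℝ → ℝ) :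
    Fin m → Ω → ℝ → ℝ :=
  fun i ω u => X i ω (τ i u)

/-- The componentwise stopped tuple of processes `Y^{(t_1,…,t_m)}`. -/
noncomputable def stopProc {Ω : Type*} {m : ℕ} (Y : Fin m → Ω → ℝ → ℝ) (tv : Fin m → ℝ) :
    Fin m → Ω → ℝ → ℝ :=
  fun i ω u => if u ≤ tv i then Y i ω u else Y i ω (tv i)

/-- A decomposition scheme `δ` on a family `𝒳` of process tuples is good if, for every
`Y ∈ 𝒳`, the decomposition `δ Y` starts at `0`, has càdlàg paths, is additive and is
normalized. -/
def IsGoodScheme {Ω : Type*} [MeasurableSpace Ω] (μ : Measure Ω) {m : ℕ}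
    (ρ : (Fin m → Ω → ℝ → ℝ) → Ω → ℝ) (𝒳 : Set (Fin m → Ω → ℝ → ℝ))
    (δ : (Fin m → Ω → ℝ → ℝ) → Fin m → ℝ → Ω → ℝ) : Prop :=
  ∀ Y ∈ 𝒳,
    (∀ (i : Fin m) ω, δ Y i 0 ω = 0) ∧
    (∀ (i : Fin m) ω, CadlagOn (fun t => δ Y i t ω)) ∧
    (∀ t, 0 ≤ t → ∀ᵐ ω ∂μ,
      ρ (stopProc Y fun _ => t) ω - ρ (stopProc Y fun _ => 0) ω =
        ∑ i : Fin m, δ Y i t ω) ∧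
    (∀ (i : Fin m) (a b : ℝ), 0 ≤ a → a < b →
      (∀ ω, ∀ x ∈ Ioc a b, ∀ y ∈ Ioc a b, Y i ω x = Y i ω y) →
      ∀ᵐ ω ∂μ, ∀ x ∈ Ioc a b, ∀ y ∈ Ioc a b, δ Y i x ω = δ Y i y ω)

/-- A decomposition scheme `δ` is stable at `X` along the delay sequence `τ`: the left
limits of `δ (X ⋄ τ n)` converge in probability to the left limits of `δ X`. -/
def StableAt {Ω : Type*} [MeasurableSpace Ω] (μ : Measure Ω) {m : ℕ}
    (X : Fin m → Ω → ℝ → ℝ) (τ : ℕ → Fin m → ℝ → ℝ)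
    (δ : (Fin m → Ω → ℝ → ℝ) → Fin m → ℝ → Ω → ℝ) : Prop :=
  ∀ (i : Fin m) (t : ℝ), 0 < t →
    TendstoInMeasure μ
      (fun n ω => Function.leftLim (fun s => δ (delayed X (τ n)) i s ω) t) atTop
      (fun ω => Function.leftLim (fun s => δ X i s ω) t)

/-- Left limits of a càdlàg function converge to the value from the right. -/
lemma tendsto_leftLim_cadlag {f : ℝ → ℝ} (hf : CadlagOn f) {t : ℝ} (ht : 0 ≤ t) :
    Tendsto (Function.leftLim f) (𝓝[>] t) (𝓝 (f t)) := by
  rw [Metric.tendsto_nhds]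
  intro ε hε
  have hrc : Tendsto f (𝓝[Ici t] t) (𝓝 (f t)) := hf.1 t ht
  have h1 : ∀ᶠ u in 𝓝[Ici t] t, dist (f u) (f t) < ε / 2 :=
    Metric.tendsto_nhds.1 hrc (ε / 2) (by positivity)
  obtain ⟨c, hc, hsub⟩ := mem_nhdsGE_iff_exists_Ico_subset.1 h1
  filter_upwards [Ioo_mem_nhdsGT_of_mem (⟨le_refl t, hc⟩ : t ∈ Ico t c)] with q hq
  obtain ⟨L, hL⟩ := hf.2 q (lt_of_le_of_lt ht hq.1)
  rw [leftLim_eq_of_tendsto hL]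
  have hev : ∀ᶠ u in 𝓝[<] q, dist (f u) (f t) ≤ ε / 2 := by
    filter_upwards [Ioo_mem_nhdsLT_of_mem (⟨hq.1, le_refl q⟩ : q ∈ Ioc t q)] with u hu
    exact le_of_lt (hsub ⟨le_of_lt hu.1, lt_trans hu.2 hq.2⟩)
  have hdist : Tendsto (fun u => dist (f u) (f t)) (𝓝[<] q) (𝓝 (dist L (f t))) :=
    hL.dist tendsto_const_nhds
  have : dist L (f t) ≤ ε / 2 := le_of_tendsto hdist hev
  linarith

/-- Two càdlàg functions with equal left limits at all rationals above `t` agree at `t`. -/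
lemma cadlag_eq_of_leftLim_eq {f g : ℝ → ℝ} (hf : CadlagOn f) (hg : CadlagOn g) {t : ℝ}
    (ht : 0 ≤ t)
    (h : ∀ q : ℚ, t < (q : ℝ) → Function.leftLim f q = Function.leftLim g q) : f t = g t := by
  have key : ∀ ε : ℝ, 0 < ε → dist (f t) (g t) ≤ ε := by
    intro ε hε
    have h1 := Metric.tendsto_nhds.1 (tendsto_leftLim_cadlag hf ht) (ε / 2) (by positivity)
    have h2 := Metric.tendsto_nhds.1 (tendsto_leftLim_cadlag hg ht) (ε / 2) (by positivity)
    obtain ⟨c, hc, hsub⟩ := mem_nhdsGT_iff_exists_Ioo_subset.1 (h1.and h2)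
    obtain ⟨q, hq1, hq2⟩ := exists_rat_btwn (show t < c from hc)
    have hmem := hsub ⟨hq1, hq2⟩
    have heq := h q hq1
    calc dist (f t) (g t)
        ≤ dist (f t) (Function.leftLim f q) + dist (Function.leftLim f q) (g t) :=
          dist_triangle _ _ _
      _ ≤ ε / 2 + ε / 2 := by
          rw [dist_comm (f t)]
          have h2' := hmem.2
          rw [← heq] at h2'
          exact add_le_add (le_of_lt hmem.1) (le_of_lt h2')
      _ = ε := by ring
  have h0 : dist (f t) (g t) ≤ 0 := le_of_forall_gt_imp_ge_of_dense fun c hc => key c hc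
  exact dist_le_zero.1 h0

/-- Uniqueness of limits in measure (for the same sequence of functions). -/
lemma tendstoInMeasure_unique {Ω : Type*} [MeasurableSpace Ω] {μ : Measure Ω}
    {f : ℕ → Ω → ℝ} {g g' : Ω → ℝ}
    (hf : TendstoInMeasure μ f atTop g) (hg : TendstoInMeasure μ f atTop g') :
    g =ᵐ[μ] g' := by
  have h : ∀ ε : ℝ, 0 < ε → μ {x | ε ≤ dist (g x) (g' x)} = 0 := by
    intro ε hε
    have key : Tendsto (fun n => μ {x | ε / 2 ≤ dist (f n x) (g x)} +
        μ {x | ε / 2 ≤ dist (f n x) (g' x)}) atTop (𝓝 0) := by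
      have := (tendstoInMeasure_iff_dist.1 hf (ε / 2) (by positivity)).add (tendstoInMeasure_iff_dist.1 hg (ε / 2) (by positivity))
      simpa using this
    have hb : ∀ n, μ {x | ε ≤ dist (g x) (g' x)} ≤
        μ {x | ε / 2 ≤ dist (f n x) (g x)} + μ {x | ε / 2 ≤ dist (f n x) (g' x)} := by
      intro n
      refine le_trans (measure_mono ?_) (measure_union_le _ _)
      intro x hx
      simp only [mem_setOf_eq] at hx ⊢
      by_contra hc
      simp only [mem_union, mem_setOf_eq, not_or] at hc
      push_neg at hc
      have := dist_triangle (g x) (f n x) (g' x)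
      rw [dist_comm (g x) (f n x)] at this
      linarith [hc.1, hc.2]
    have h0 : μ {x | ε ≤ dist (g x) (g' x)} ≤ 0 :=
      ge_of_tendsto key (Eventually.of_forall hb)
    exact le_antisymm h0 zero_le
  have hsub : {x | g x ≠ g' x} ⊆ ⋃ k : ℕ, {x | 1 / (k + 1 : ℝ) ≤ dist (g x) (g' x)} := by
    intro x hx
    have hd : 0 < dist (g x) (g' x) := dist_pos.2 hx
    obtain ⟨k, hk⟩ := exists_nat_one_div_lt hd
    exact mem_iUnion.2 ⟨k, le_of_lt hk⟩
  have : μ {x | g x ≠ g' x} = 0 := by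
    refine measure_mono_null hsub (measure_iUnion_null fun k => h _ ?_)
    positivity
  exact this

/-- Deterministic core: two additive, normalized decompositions along a phased partition
coincide. -/
lemma det_unique {m : ℕ} (f g : Fin m → ℝ → ℝ)
    (hf0 : ∀ i, f i 0 = 0) (hg0 : ∀ i, g i 0 = 0)
    (hfc : ∀ i, CadlagOn (f i)) (hgc : ∀ i, CadlagOn (g i))
    (u : ℕ → ℝ) (hu0 : u 0 = 0) (humono : StrictMono u) (hutop : Tendsto u atTop atTop)
    (i₀ : ℕ → Fin m)
    (hsum : ∀ q : ℚ, 0 ≤ (q : ℝ) → ∑ i, f i q = ∑ i, g i q)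
    (hfconst : ∀ l, ∀ j, j ≠ i₀ l →
      ∀ x ∈ Ioc (u l) (u (l + 1)), ∀ y ∈ Ioc (u l) (u (l + 1)), f j x = f j y)
    (hgconst : ∀ l, ∀ j, j ≠ i₀ l →
      ∀ x ∈ Ioc (u l) (u (l + 1)), ∀ y ∈ Ioc (u l) (u (l + 1)), g j x = g j y) :
    ∀ i, ∀ t, 0 ≤ t → f i t = g i t := by
  have hu_nonneg : ∀ l, 0 ≤ u l := fun l => hu0 ▸ humono.monotone (Nat.zero_le l)
  -- Step 1: the sums agree at every nonnegative real.
  have hS : ∀ t, 0 ≤ t → ∑ i, f i t = ∑ i, g i t := by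
    intro t ht
    -- choose rationals decreasing to t
    have hseq : ∀ n : ℕ, ∃ q : ℚ, t < (q : ℝ) ∧ (q : ℝ) < t + 1 / (n + 1) := by
      intro n
      exact exists_rat_btwn (lt_add_of_pos_right t (by positivity))
    choose q hq1 hq2 using hseq
    have hq_tendsto : Tendsto (fun n => ((q n : ℝ))) atTop (𝓝 t) := by
      have h1 : Tendsto (fun n : ℕ => t + 1 / (n + 1 : ℝ)) atTop (𝓝 (t + 0)) :=
        tendsto_const_nhds.add tendsto_one_div_add_atTop_nhds_zero_nat
      rw [add_zero] at h1
      exact tendsto_of_tendsto_of_tendsto_of_le_of_le tendsto_const_nhds h1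
        (fun n => le_of_lt (hq1 n)) (fun n => le_of_lt (hq2 n))
    have hq_mem : ∀ n, ((q n : ℝ)) ∈ Ici t := fun n => le_of_lt (hq1 n)
    have hq_tendsto' : Tendsto (fun n => ((q n : ℝ))) atTop (𝓝[Ici t] t) :=
      tendsto_nhdsWithin_iff.2 ⟨hq_tendsto, Eventually.of_forall hq_mem⟩
    have hSf : Tendsto (fun s => ∑ i, f i s) (𝓝[Ici t] t) (𝓝 (∑ i, f i t)) :=
      tendsto_finset_sum _ (fun i _ => hfc i |>.1 t ht)
    have hSg : Tendsto (fun s => ∑ i, g i s) (𝓝[Ici t] t) (𝓝 (∑ i, g i t)) :=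
      tendsto_finset_sum _ (fun i _ => hgc i |>.1 t ht)
    have h1 : Tendsto (fun n => ∑ i, f i (q n)) atTop (𝓝 (∑ i, f i t)) :=
      hSf.comp hq_tendsto'
    have h2 : Tendsto (fun n => ∑ i, g i (q n)) atTop (𝓝 (∑ i, g i t)) :=
      hSg.comp hq_tendsto'
    have heq : (fun n => ∑ i, f i (q n)) = fun n => ∑ i, g i (q n) := by
      funext n
      exact hsum (q n) (le_trans ht (le_of_lt (hq1 n)))
    rw [heq] at h1
    exact tendsto_nhds_unique h1 h2
  -- Step 2: constant components are determined at the left endpoint.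
  have hstep : ∀ (h : Fin m → ℝ → ℝ), (∀ i, CadlagOn (h i)) →
      ∀ l, ∀ j, (∀ x ∈ Ioc (u l) (u (l + 1)), ∀ y ∈ Ioc (u l) (u (l + 1)), h j x = h j y) →
      ∀ t ∈ Ioc (u l) (u (l + 1)), h j t = h j (u l) := by
    intro h hc l j hconst t htmem
    have hrc : Tendsto (h j) (𝓝[Ici (u l)] (u l)) (𝓝 (h j (u l))) := (hc j).1 _ (hu_nonneg l)
    have hrc' : Tendsto (h j) (𝓝[>] (u l)) (𝓝 (h j (u l))) :=
      hrc.mono_left (nhdsWithin_mono _ Ioi_subset_Ici_self)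
    have hev : ∀ᶠ s in 𝓝[>] (u l), h j s = h j t := by
      filter_upwards [Ioo_mem_nhdsGT_of_mem
        (⟨le_refl (u l), humono (Nat.lt_succ_self l)⟩ : u l ∈ Ico (u l) (u (l + 1)))] with s hs
      exact hconst s ⟨hs.1, le_of_lt hs.2⟩ t htmem
    have hconst_tendsto : Tendsto (h j) (𝓝[>] (u l)) (𝓝 (h j t)) := by
      rw [tendsto_congr' hev]
      exact tendsto_const_nhds
    exact tendsto_nhds_unique hconst_tendsto hrc'
  -- Step 3: induction along the partition.
  have main : ∀ l, ∀ t, 0 ≤ t → t ≤ u l → ∀ i, f i t = g i t := by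
    intro l
    induction l with
    | zero =>
      intro t ht1 ht2 i
      have : t = 0 := le_antisymm (hu0 ▸ ht2) ht1
      rw [this, hf0, hg0]
    | succ l ih =>
      intro t ht1 ht2 i
      by_cases hcase : t ≤ u l
      · exact ih t ht1 hcase i
      · push_neg at hcase
        have htmem : t ∈ Ioc (u l) (u (l + 1)) := ⟨hcase, ht2⟩
        have hne : ∀ j, j ≠ i₀ l → f j t = g j t := by
          intro j hj
          rw [hstep f hfc l j (hfconst l j hj) t htmem,
            hstep g hgc l j (hgconst l j hj) t htmem]
          exact ih (u l) (hu_nonneg l) (le_refl _) j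
        by_cases hi : i = i₀ l
        · have hsum_t := hS t ht1
          have hf_split : f i t + ∑ j ∈ Finset.univ.erase i, f j t = ∑ j, f j t :=
            Finset.add_sum_erase _ (fun j => f j t) (Finset.mem_univ i)
          have hg_split : g i t + ∑ j ∈ Finset.univ.erase i, g j t = ∑ j, g j t :=
            Finset.add_sum_erase _ (fun j => g j t) (Finset.mem_univ i)
          have herase : ∑ j ∈ Finset.univ.erase i, f j t = ∑ j ∈ Finset.univ.erase i, g j t :=
            Finset.sum_congr rfl fun j hj => hne j (by rw [← hi]; exact Finset.ne_of_mem_erase hj)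
          linarith [hf_split, hg_split, hsum_t, herase]
        · exact hne i hi
  intro i t ht
  obtain ⟨l, hl⟩ := (hutop.eventually_ge_atTop t).exists
  exact main l t ht hl i

/-- Theorem 5.1, Uniqueness. Two additive, normalized decomposition
schemes that are stable at `X` along a refining sequence of phased delays increasing to
identity coincide at `X` almost surely. -/
theorem uniqueness_of_additive_normalized_stable_schemes
    {Ω : Type*} [MeasurableSpace Ω] (μ : Measure Ω) [IsProbabilityMeasure μ]
    {m : ℕ} (hm : 1 ≤ m)
    (X : Fin m → Ω → ℝ → ℝ) (hX : ∀ i ω, CadlagOn (X i ω))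
    (ρ : (Fin m → Ω → ℝ → ℝ) → Ω → ℝ)
    (𝒯 : Set (Fin m → ℝ → ℝ)) (h𝒯 : ∀ τ' ∈ 𝒯, IsDelay τ')
    (τ : ℕ → Fin m → ℝ → ℝ) (hτmem : ∀ n, τ n ∈ 𝒯)
    (hτdelay : ∀ n, IsDelay (τ n))
    (hτphased : ∀ n, IsPhasedDelay (τ n))
    (hτref : IsRefiningToIdentity τ)
    (δ δ' : (Fin m → Ω → ℝ → ℝ) → Fin m → ℝ → Ω → ℝ)
    (hδ : IsGoodScheme μ ρ (insert X {Y | ∃ τ' ∈ 𝒯, Y = delayed X τ'}) δ)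
    (hδ' : IsGoodScheme μ ρ (insert X {Y | ∃ τ' ∈ 𝒯, Y = delayed X τ'}) δ')
    (hδstab : StableAt μ X τ δ) (hδ'stab : StableAt μ X τ δ') :
    ∀ᵐ ω ∂μ, ∀ (i : Fin m) (t : ℝ), 0 ≤ t → δ X i t ω = δ' X i t ω := by
  classical
  have hXmem : X ∈ insert X {Y | ∃ τ' ∈ 𝒯, Y = delayed X τ'} := mem_insert _ _
  -- Step A: for each `n`, the two schemes agree a.s. on the delayed process.
  have hEq : ∀ n, ∀ᵐ ω ∂μ, ∀ (i : Fin m) (t : ℝ), 0 ≤ t →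
      δ (delayed X (τ n)) i t ω = δ' (delayed X (τ n)) i t ω := by
    intro n
    have hYmem : delayed X (τ n) ∈ insert X {Y | ∃ τ' ∈ 𝒯, Y = delayed X τ'} :=
      Set.mem_insert_iff.2 (Or.inr ⟨τ n, hτmem n, rfl⟩)
    obtain ⟨hz1, hc1, ha1, hn1⟩ := hδ _ hYmem
    obtain ⟨hz2, hc2, ha2, hn2⟩ := hδ' _ hYmem
    obtain ⟨u, hu0, humono, hutop, hph⟩ := hτphased n
    choose i₀ hi₀ using hph
    have hu_nonneg : ∀ l, 0 ≤ u l := fun l => hu0 ▸ humono.monotone (Nat.zero_le l)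
    have hYconst : ∀ l, ∀ j, j ≠ i₀ l → ∀ ω, ∀ x ∈ Ioc (u l) (u (l + 1)),
        ∀ y ∈ Ioc (u l) (u (l + 1)), delayed X (τ n) j ω x = delayed X (τ n) j ω y := by
      intro l j hj ω x hx y hy
      simp only [delayed]
      rw [hi₀ l j hj x hx y hy]
    have hAA : ∀ᵐ ω ∂μ, ∀ q : ℚ, 0 ≤ (q : ℝ) →
        ∑ i, δ (delayed X (τ n)) i q ω = ∑ i, δ' (delayed X (τ n)) i q ω := by
      rw [ae_all_iff]
      intro q
      by_cases hq : 0 ≤ (q : ℝ)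
      · filter_upwards [ha1 q hq, ha2 q hq] with ω h1 h2 _
        rw [← h1, ← h2]
      · exact Eventually.of_forall fun ω h => absurd h hq
    have hBB1 : ∀ᵐ ω ∂μ, ∀ l : ℕ, ∀ j, j ≠ i₀ l → ∀ x ∈ Ioc (u l) (u (l + 1)),
        ∀ y ∈ Ioc (u l) (u (l + 1)), δ (delayed X (τ n)) j x ω = δ (delayed X (τ n)) j y ω := by
      rw [ae_all_iff]
      intro l
      rw [ae_all_iff]
      intro j
      by_cases hj : j ≠ i₀ l
      · filter_upwards [hn1 j (u l) (u (l + 1)) (hu_nonneg l) (humono (Nat.lt_succ_self l))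
          (fun ω => hYconst l j hj ω)] with ω h _
        exact h
      · exact Eventually.of_forall fun ω h => absurd h hj
    have hBB2 : ∀ᵐ ω ∂μ, ∀ l : ℕ, ∀ j, j ≠ i₀ l → ∀ x ∈ Ioc (u l) (u (l + 1)),
        ∀ y ∈ Ioc (u l) (u (l + 1)), δ' (delayed X (τ n)) j x ω = δ' (delayed X (τ n)) j y ω := by
      rw [ae_all_iff]
      intro l
      rw [ae_all_iff]
      intro j
      by_cases hj : j ≠ i₀ l
      · filter_upwards [hn2 j (u l) (u (l + 1)) (hu_nonneg l) (humono (Nat.lt_succ_self l))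
          (fun ω => hYconst l j hj ω)] with ω h _
        exact h
      · exact Eventually.of_forall fun ω h => absurd h hj
    filter_upwards [hAA, hBB1, hBB2] with ω hA h1 h2
    exact det_unique (fun i s => δ (delayed X (τ n)) i s ω)
      (fun i s => δ' (delayed X (τ n)) i s ω)
      (fun i => hz1 i ω) (fun i => hz2 i ω) (fun i => hc1 i ω) (fun i => hc2 i ω)
      u hu0 humono hutop i₀ hA h1 h2
  -- Step B: a.e. equality of left limits of the approximating sequences.
  have hLL : ∀ n (i : Fin m) (t : ℝ), 0 < t →
      (fun ω => Function.leftLim (fun s => δ (delayed X (τ n)) i s ω) t) =ᵐ[μ]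
      (fun ω => Function.leftLim (fun s => δ' (delayed X (τ n)) i s ω) t) := by
    intro n i t ht
    have hYmem : delayed X (τ n) ∈ insert X {Y | ∃ τ' ∈ 𝒯, Y = delayed X τ'} :=
      Set.mem_insert_iff.2 (Or.inr ⟨τ n, hτmem n, rfl⟩)
    obtain ⟨_, hc1, _, _⟩ := hδ _ hYmem
    filter_upwards [hEq n] with ω hω
    obtain ⟨L, hL⟩ := (hc1 i ω).2 t ht
    have hL' : Tendsto (fun s => δ' (delayed X (τ n)) i s ω) (𝓝[<] t) (𝓝 L) := by
      refine Tendsto.congr' ?_ hL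
      filter_upwards [Ioo_mem_nhdsLT_of_mem (⟨ht, le_refl t⟩ : t ∈ Ioc 0 t)] with s hs
      exact hω i s (le_of_lt hs.1)
    rw [leftLim_eq_of_tendsto hL,
      leftLim_eq_of_tendsto hL']
  -- Step C: a.e. equality of left limits of the schemes at `X`, at every rational.
  have hXLL : ∀ (i : Fin m) (q : ℚ), 0 < (q : ℝ) →
      (fun ω => Function.leftLim (fun s => δ X i s ω) (q : ℝ)) =ᵐ[μ]
      (fun ω => Function.leftLim (fun s => δ' X i s ω) (q : ℝ)) := by
    intro i q hq
    have h1 := hδstab i q hq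
    have h2 := hδ'stab i q hq
    have h2' := TendstoInMeasure.congr_left (fun n => (hLL n i q hq).symm) h2
    exact tendstoInMeasure_unique h1 h2'
  have hall : ∀ᵐ ω ∂μ, ∀ (i : Fin m) (q : ℚ), 0 < (q : ℝ) →
      Function.leftLim (fun s => δ X i s ω) (q : ℝ) =
      Function.leftLim (fun s => δ' X i s ω) (q : ℝ) := by
    rw [ae_all_iff]
    intro i
    rw [ae_all_iff]
    intro q
    by_cases hq : 0 < (q : ℝ)
    · filter_upwards [hXLL i q hq] with ω h _
      exact h
    · exact Eventually.of_forall fun ω h => absurd h hq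
  obtain ⟨_, hcX, _, _⟩ := hδ X hXmem
  obtain ⟨_, hcX', _, _⟩ := hδ' X hXmem
  filter_upwards [hall] with ω hω i t ht
  exact cadlag_eq_of_leftLim_eq (hcX i ω) (hcX' i ω) ht
    (fun q hq => hω i q (lt_of_le_of_lt ht hq))
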